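/- Let σ < 0, 0 < δt < Δt ≤ ΔT, α > 0 and L ≥ 1. If μ* is a real negative root of the polynomial P that lies outside the open disc D_σ, then μ* > −(|δγ| + α·δβ·(1 + β))/(γ + α·(1 − β²)). -/

import Mathlib

open Finset in

/-- `β_τ = (1 - σ τ)^(-ΔT/τ)` (real exponent). -/
noncomputable def betaF (σ ΔT τ : ℝ) : ℝ := (1 - σ * τ) ^ (-(ΔT / τ))

/-- `γ_τ = (β_τ² - 1)/(σ (2 - σ τ))`. -/
noncomputable def gammaF (σ ΔT τ : ℝ) : ℝ := ((betaF σ ΔT τ) ^ 2 - 1) / (σ * (2 - σ * τ))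

/-- The polynomial `P(μ) = α μ^{2L-1} + (μγ - δγ) ∑_{ℓ=0}^{L-1} μ^{2(L-ℓ-1)} (μβ - δβ)^{2ℓ}`. -/
noncomputable def Ppoly (β δβ γ δγ α : ℝ) (L : ℕ) (μ : ℂ) : ℂ :=
  (α : ℂ) * μ ^ (2 * L - 1) +
    (μ * (γ : ℂ) - (δγ : ℂ)) *
      ∑ ℓ ∈ Finset.range L, μ ^ (2 * (L - ℓ - 1)) * (μ * (β : ℂ) - (δβ : ℂ)) ^ (2 * ℓ)

/-- The open disc `D_σ` with center `μ₀ = -β δβ/(1-β²)` and radius `δβ/(1-β²)`. -/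
noncomputable def Dsigma (β δβ : ℝ) : Set ℂ :=
  {μ : ℂ | ‖μ - ((-(β * δβ) / (1 - β ^ 2) : ℝ) : ℂ)‖ < δβ / (1 - β ^ 2)}

open Finset in
lemma sum_identity (μ ν : ℝ) (K : ℕ) :
    (∑ ℓ ∈ Finset.range (K+1), μ^(2*((K+1)-ℓ-1)) * ν^(2*ℓ)) * (ν^2 - μ^2)
      = (ν^2)^(K+1) - (μ^2)^(K+1) := by
  rw [← geom_sum₂_mul (ν^2) (μ^2) (K+1)]
  congr 1
  apply Finset.sum_congr rfl
  intro ℓ hℓ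
  have h1 : (K+1) - ℓ - 1 = K - ℓ := by omega
  have h2 : (K+1) - 1 - ℓ = K - ℓ := by omega
  rw [h1, h2, pow_mul, pow_mul]
  ring

lemma betaF_aux_mono {σ ΔT a b : ℝ} (hσ : σ < 0) (ha : 0 < a) (hab : a < b) (hΔT : 0 < ΔT) :
    betaF σ ΔT a < betaF σ ΔT b := by
  have hb : 0 < b := ha.trans hab
  have h1a : (1:ℝ) < 1 - σ * a := by nlinarith
  have h1b : (1:ℝ) < 1 - σ * b := by nlinarith
  have hkey : (1 - σ*b) ^ ((1:ℝ)/b) < (1 - σ*a) ^ ((1:ℝ)/a) := by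
    have hBern : 1 + (b/a) * (-σ*a) < (1 + (-σ*a)) ^ (b/a : ℝ) :=
      one_add_mul_self_lt_rpow_one_add (by nlinarith) (by nlinarith)
        ((lt_div_iff₀ ha).mpr (by linarith))
    have h2 : (1 - σ*b) < (1 - σ*a) ^ (b/a : ℝ) := by
      have e1 : 1 + (b/a) * (-σ*a) = 1 - σ*b := by field_simp; ring
      have e2 : 1 + (-σ*a) = 1 - σ*a := by ring
      rw [e1, e2] at hBern; exact hBern
    calc (1 - σ*b) ^ ((1:ℝ)/b) < ((1 - σ*a) ^ (b/a : ℝ)) ^ ((1:ℝ)/b) :=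
          Real.rpow_lt_rpow (by linarith) h2 (by positivity)
      _ = (1 - σ*a) ^ ((1:ℝ)/a) := by
          rw [← Real.rpow_mul (by linarith)]
          congr 1
          field_simp
  have ea : -(ΔT / a) = (1/a) * (-ΔT) := by ring
  have eb : -(ΔT / b) = (1/b) * (-ΔT) := by ring
  unfold betaF
  rw [ea, eb, Real.rpow_mul (by linarith), Real.rpow_mul (by linarith)]
  exact Real.rpow_lt_rpow_of_neg (Real.rpow_pos_of_pos (by linarith) _) hkey (by linarith)

lemma betaF_pos {σ ΔT τ : ℝ} (hσ : σ < 0) (hτ : 0 < τ) : 0 < betaF σ ΔT τ :=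
  Real.rpow_pos_of_pos (by nlinarith) _

lemma betaF_lt_one {σ ΔT τ : ℝ} (hσ : σ < 0) (hτ : 0 < τ) (hΔT : 0 < ΔT) :
    betaF σ ΔT τ < 1 :=
  Real.rpow_lt_one_of_one_lt_of_neg (by nlinarith) (neg_lt_zero.mpr (div_pos hΔT hτ))

set_option maxHeartbeats 2000000 in
theorem isolated_eigenvalue_lower_bound (σ δt Δt ΔT α : ℝ) (L : ℕ) (hσ : σ < 0)
    (hδt : 0 < δt) (hδtΔt : δt < Δt) (hΔtΔT : Δt ≤ ΔT) (hα : 0 < α) (hL : 1 ≤ L)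
    (μstar : ℝ) (hneg : μstar < 0)
    (hroot : Ppoly (betaF σ ΔT Δt) (betaF σ ΔT Δt - betaF σ ΔT δt)
        (gammaF σ ΔT Δt) (gammaF σ ΔT Δt - gammaF σ ΔT δt) α L (μstar : ℂ) = 0)
    (hout : (μstar : ℂ) ∉ Dsigma (betaF σ ΔT Δt) (betaF σ ΔT Δt - betaF σ ΔT δt)) :
    μstar >
      -((|gammaF σ ΔT Δt - gammaF σ ΔT δt| +
          α * (betaF σ ΔT Δt - betaF σ ΔT δt) * (1 + betaF σ ΔT Δt)) /
        (gammaF σ ΔT Δt + α * (1 - (betaF σ ΔT Δt) ^ 2))) := by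
  have hΔt : 0 < Δt := hδt.trans hδtΔt
  have hΔT : 0 < ΔT := lt_of_lt_of_le hΔt hΔtΔT
  set μ := μstar with hμdef
  set β := betaF σ ΔT Δt with hβdef
  set γ := gammaF σ ΔT Δt with hγdef
  set δβ := betaF σ ΔT Δt - betaF σ ΔT δt with hδβdef
  set δγ := gammaF σ ΔT Δt - gammaF σ ΔT δt with hδγdef
  have hβ0 : 0 < β := betaF_pos hσ hΔt
  have hβ1 : β < 1 := betaF_lt_one hσ hΔt hΔT
  have hδβ : 0 < δβ := sub_pos.mpr (betaF_aux_mono hσ hδt hδtΔt hΔT)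
  have hγ : 0 < γ := by
    rw [hγdef, gammaF]
    apply div_pos_of_neg_of_neg
    · have h1 : 0 < betaF σ ΔT Δt := betaF_pos hσ hΔt
      have h2 : betaF σ ΔT Δt < 1 := betaF_lt_one hσ hΔt hΔT
      nlinarith
    · nlinarith [mul_neg_of_neg_of_pos hσ hΔt]
  have h12 : (0:ℝ) < 1 - β^2 := by nlinarith
  -- translate the disc condition
  have hout' : ¬ (|μ - (-(β * δβ) / (1 - β ^ 2))| < δβ / (1 - β ^ 2)) := by
    intro h
    apply hout
    simp only [Dsigma, Set.mem_setOf_eq]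
    rw [show (μ:ℂ) - ((-(β * δβ) / (1 - β ^ 2) : ℝ):ℂ)
        = ((μ - (-(β * δβ) / (1 - β ^ 2)) : ℝ):ℂ) by push_cast; ring, Complex.norm_real, Real.norm_eq_abs]
    exact h
  have hdisc : δβ / (1 - β ^ 2) ≤ |μ - (-(β * δβ) / (1 - β ^ 2))| := not_lt.mp hout'
  have hμν : μ ≤ μ * β - δβ := by
    rcases le_abs.mp hdisc with h | h
    · -- μ ≥ center + radius > 0, contradiction with μ < 0
      exfalso
      have hr : 0 < δβ / (1 - β^2) := div_pos hδβ h12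
      have hc : -(β * δβ) / (1 - β^2) + δβ / (1 - β^2) ≤ μ := by linarith
      have : -(β * δβ) / (1 - β^2) + δβ / (1 - β^2) = δβ * (1-β) / (1 - β^2) := by ring
      rw [this] at hc
      have : 0 < δβ * (1-β) / (1 - β^2) := by
        apply div_pos _ h12; nlinarith
      linarith
    · -- μ ≤ center - radius
      have h2 : δβ / (1 - β^2) ≤ -(β * δβ) / (1 - β^2) - μ := by linarith
      rw [div_le_iff₀ h12, sub_mul, div_mul_cancel₀ _ h12.ne'] at h2
      nlinarith [h2, hβ0, hβ1]
  -- convert root equation to the reals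
  have hcast : ((α*μ^(2*L-1) + (μ*γ-δγ) *
      ∑ ℓ ∈ Finset.range L, μ^(2*(L-ℓ-1)) * (μ*β-δβ)^(2*ℓ) : ℝ) : ℂ) = 0 := by
    rw [← hroot]
    simp only [Ppoly]
    push_cast
    ring
  have hrootR : α*μ^(2*L-1) + (μ*γ-δγ) *
      ∑ ℓ ∈ Finset.range L, μ^(2*(L-ℓ-1)) * (μ*β-δβ)^(2*ℓ) = 0 :=
    Complex.ofReal_eq_zero.mp hcast
  clear hroot hcast hout hout' hdisc
  clear_value μ β γ δβ δγ
  clear hμdef hβdef hγdef hδβdef hδγdef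
  obtain ⟨K, rfl⟩ : ∃ K, L = K+1 := ⟨L-1, (Nat.succ_pred_eq_of_pos hL).symm⟩
  have hexp : 2*(K+1)-1 = 2*K+1 := by omega
  rw [hexp] at hrootR
  have hμne : μ ≠ 0 := ne_of_lt hneg
  have hμ2 : 0 < μ^2 := by positivity
  have hMpos : 0 < (μ^2)^K := pow_pos hμ2 K
  have hD : 0 < γ + α*(1-β^2) := by nlinarith
  rw [gt_iff_lt, ← neg_div, div_lt_iff₀ hD]
  have habs : -δγ ≤ |δγ| := neg_le_abs δγ
  rcases eq_or_lt_of_le hμν with heq | hlt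
  · -- boundary case: μ = μβ - δβ
    have hterm : ∀ ℓ ∈ Finset.range (K+1), μ^(2*((K+1)-ℓ-1)) * (μ*β-δβ)^(2*ℓ) = μ^(2*K) := by
      intro ℓ hℓ
      rw [← heq, ← pow_add]
      congr 1
      have := Finset.mem_range.mp hℓ
      omega
    rw [Finset.sum_congr rfl hterm, Finset.sum_const, Finset.card_range, nsmul_eq_mul] at hrootR
    have hfac : (α*μ + (μ*γ-δγ)*(K+1)) * μ^(2*K) = 0 := by
      rw [← hrootR]; push_cast; ring
    have hlin : α*μ + (μ*γ-δγ)*((K:ℝ)+1) = 0 := by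
      rcases mul_eq_zero.mp hfac with h | h
      · exact_mod_cast h
      · exact absurd h (pow_ne_zero _ hμne)
    clear hfac hrootR hμν
    have hK1 : (0:ℝ) < (K:ℝ)+1 := by positivity
    have h4 : 0 < (μ*γ-δγ)*((K:ℝ)+1) := by
      have h5 : (μ*γ-δγ)*((K:ℝ)+1) = α*(-μ) := by linarith
      rw [h5]; exact mul_pos hα (neg_pos.mpr hneg)
    have hpos : 0 < μ*γ - δγ := by
      rcases mul_pos_iff.mp h4 with ⟨h,_⟩ | ⟨_,h⟩
      · exact h
      · linarith
    have hsub : δβ = μ*β - μ := by linarith [heq]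
    have hsub2 : α*δβ*(1+β) = -(μ*(α*(1-β^2))) := by rw [hsub]; ring
    -- goal: -(|δγ| + α*δβ*(1+β)) < μ * (γ + α*(1-β^2))
    clear * - hpos habs hsub2
    nlinarith [hpos, habs, hsub2]
  · -- strict case: μ < μβ - δβ
    have hν0 : μ*β - δβ < 0 := by clear hrootR; nlinarith
    have hν2μ2 : (μ*β - δβ)^2 < μ^2 := by clear hrootR; nlinarith
    have hpow : ((μ*β-δβ)^2)^(K+1) < (μ^2)^(K+1) :=
      pow_lt_pow_left₀ hν2μ2 (sq_nonneg _) (Nat.succ_ne_zero K)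
    obtain ⟨S, hSdef⟩ : ∃ S:ℝ, S = ∑ ℓ ∈ Finset.range (K+1), μ^(2*((K+1)-ℓ-1)) * (μ*β-δβ)^(2*ℓ) :=
      ⟨_, rfl⟩
    rw [← hSdef] at hrootR
    have hsum_eq : S * ((μ*β-δβ)^2 - μ^2) = ((μ*β-δβ)^2)^(K+1) - (μ^2)^(K+1) := by
      rw [hSdef]; exact sum_identity μ (μ*β-δβ) K
    have h2 : (μ*γ-δγ)*S = -(α*μ^(2*K+1)) := by linear_combination hrootR
    clear hSdef hrootR hμν
    have hSpos : 0 < S := by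
      clear h2
      nlinarith [hsum_eq, hpow, hν2μ2]
    have hp21 : μ^(2*K+1) = μ * (μ^2)^K := by rw [pow_succ', pow_mul]
    have hpos : 0 < μ*γ - δγ := by
      clear hsum_eq hpow
      nlinarith [h2, hSpos, hp21, mul_pos hα hMpos, hneg]
    have hid : (μ*γ-δγ) * (((μ*β-δβ)^2)^(K+1) - (μ^2)^(K+1))
        = α*μ*(μ^2)^K * (μ^2 - (μ*β-δβ)^2) := by
      calc (μ*γ-δγ) * (((μ*β-δβ)^2)^(K+1) - (μ^2)^(K+1))
          = (μ*γ-δγ)*S*(((μ*β-δβ)^2) - μ^2) := by rw [mul_assoc, hsum_eq]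
        _ = -(α*μ^(2*K+1))*(((μ*β-δβ)^2) - μ^2) := by rw [h2]
        _ = α*μ*(μ^2)^K * (μ^2 - (μ*β-δβ)^2) := by rw [hp21]; ring
    clear h2 hsum_eq hSpos hpow
    have hkey : (α*(-μ)*(μ^2-(μ*β-δβ)^2)) * (μ^2)^K ≤ ((μ*γ-δγ)*μ^2) * (μ^2)^K := by
      have hpw : (μ^2)^(K+1) = (μ^2)^K * μ^2 := pow_succ _ _
      nlinarith [hid, mul_nonneg hpos.le (pow_nonneg (sq_nonneg (μ*β-δβ)) (K+1))]
    have hkey2 : α*(-μ)*(μ^2-(μ*β-δβ)^2) ≤ (μ*γ-δγ)*μ^2 :=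
      le_of_mul_le_mul_right hkey hMpos
    have hstrict : δβ < -μ*(1-β) := by nlinarith [hlt]
    have pos1 : 0 < α*(-μ)*δβ := mul_pos (mul_pos hα (neg_pos.mpr hneg)) hδβ
    have h3 : α*(-μ)*δβ*δβ < α*(-μ)*δβ*(-μ*(1-β)) :=
      mul_lt_mul_of_pos_left hstrict pos1
    clear * - hkey2 h3 habs hμ2
    nlinarith [hkey2, h3, habs, hμ2, mul_nonneg (by linarith : (0:ℝ) ≤ |δγ|+δγ) hμ2.le]
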